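/- The minimum in the trajectory-recovery formula: given S ⪰ 0 symmetric with S invertible, v ∈ ℝⁿ, and a conditional value function V(x_k) = sup_λ [−½ λᵀ C λ − λᵀ(x_k − a)] with C ⪰ 0 symmetric and a ∈ ℝⁿ fixed, the minimizer over x_k of V(x_k) + ½ x_kᵀ S x_k − vᵀ x_k is x* = (I + C S)⁻¹ (a + C v). -/

import Mathlib

open scoped Matrix

theorem stmt15 {n : ℕ} (S C : Matrix (Fin n) (Fin n) ℝ) (a v : Fin n → ℝ)
    (hS : S.PosSemidef) (hSinv : IsUnit S) (hC : C.PosSemidef) :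
    ∀ x : Fin n → ℝ,
      (⨆ l : Fin n → ℝ,
          ((-(1 / 2) * (l ⬝ᵥ C *ᵥ l) - l ⬝ᵥ ((1 + C * S)⁻¹ *ᵥ (a + C *ᵥ v) - a) : ℝ) : EReal))
        + (((1 / 2) * ((1 + C * S)⁻¹ *ᵥ (a + C *ᵥ v) ⬝ᵥ S *ᵥ ((1 + C * S)⁻¹ *ᵥ (a + C *ᵥ v)))
            - v ⬝ᵥ (1 + C * S)⁻¹ *ᵥ (a + C *ᵥ v) : ℝ) : EReal)
      ≤ (⨆ l : Fin n → ℝ, ((-(1 / 2) * (l ⬝ᵥ C *ᵥ l) - l ⬝ᵥ (x - a) : ℝ) : EReal))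
        + (((1 / 2) * (x ⬝ᵥ S *ᵥ x) - v ⬝ᵥ x : ℝ) : EReal) := by
  intro x
  have hSsym : ∀ u w : Fin n → ℝ, u ⬝ᵥ S *ᵥ w = w ⬝ᵥ S *ᵥ u := by
    intro u w
    have h : Sᵀ = S := by simpa [Matrix.conjTranspose_eq_transpose_of_trivial] using hS.1.eq
    rw [Matrix.dotProduct_mulVec, ← Matrix.mulVec_transpose, h, dotProduct_comm]
  have hCsym : ∀ u w : Fin n → ℝ, u ⬝ᵥ C *ᵥ w = w ⬝ᵥ C *ᵥ u := by
    intro u w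
    have h : Cᵀ = C := by simpa [Matrix.conjTranspose_eq_transpose_of_trivial] using hC.1.eq
    rw [Matrix.dotProduct_mulVec, ← Matrix.mulVec_transpose, h, dotProduct_comm]
  have hSpos : ∀ y : Fin n → ℝ, (0:ℝ) ≤ y ⬝ᵥ S *ᵥ y := fun y => by simpa using hS.dotProduct_mulVec_nonneg y
  have hCpos : ∀ y : Fin n → ℝ, (0:ℝ) ≤ y ⬝ᵥ C *ᵥ y := fun y => by simpa using hC.dotProduct_mulVec_nonneg y
  set M : Matrix (Fin n) (Fin n) ℝ := 1 + C * S with hMdef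
  -- M is invertible
  have hMunit : IsUnit M := by
    rw [← Matrix.mulVec_injective_iff_isUnit]
    have hker : ∀ y : Fin n → ℝ, M *ᵥ y = 0 → y = 0 := by
      intro y hy
      have h1 : y + C *ᵥ (S *ᵥ y) = 0 := by
        simpa [hMdef, Matrix.add_mulVec, Matrix.one_mulVec, ← Matrix.mulVec_mulVec] using hy
      have hyc : y = -(C *ᵥ (S *ᵥ y)) := by
        have := congrArg (fun z => z - C *ᵥ (S *ᵥ y)) h1
        simpa [sub_eq_add_neg, add_assoc] using this
      have h4 : y ⬝ᵥ S *ᵥ y = -((S *ᵥ y) ⬝ᵥ C *ᵥ (S *ᵥ y)) := by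
        calc y ⬝ᵥ S *ᵥ y = (S *ᵥ y) ⬝ᵥ y := dotProduct_comm _ _
        _ = (S *ᵥ y) ⬝ᵥ (-(C *ᵥ (S *ᵥ y))) := by rw [← hyc]
        _ = -((S *ᵥ y) ⬝ᵥ C *ᵥ (S *ᵥ y)) := by rw [dotProduct_neg]
      have hq : y ⬝ᵥ S *ᵥ y = 0 := le_antisymm (by have := hCpos (S *ᵥ y); linarith) (hSpos y)
      have hSy : S *ᵥ y = 0 := (hS.dotProduct_mulVec_zero_iff y).mp (by simpa using hq)
      have : Function.Injective S.mulVec := Matrix.mulVec_injective_iff_isUnit.mpr hSinv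
      have := this (by simpa [Matrix.mulVec_zero] using hSy : S *ᵥ y = S *ᵥ 0)
      exact this
    intro y z hyz
    have : M *ᵥ (y - z) = 0 := by rw [Matrix.mulVec_sub, hyz, sub_self]
    exact sub_eq_zero.mp (hker _ this)
  set xs : Fin n → ℝ := M⁻¹ *ᵥ (a + C *ᵥ v) with hxs
  have hdet : IsUnit M.det := (Matrix.isUnit_iff_isUnit_det M).mp hMunit
  have hMx : M *ᵥ xs = a + C *ᵥ v := by
    rw [hxs, Matrix.mulVec_mulVec, Matrix.mul_nonsing_inv _ hdet, Matrix.one_mulVec]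
  set l0 : Fin n → ℝ := S *ᵥ xs - v with hl0
  have hSxs : S *ᵥ xs = v + l0 := by rw [hl0]; abel
  have hCS : C *ᵥ (S *ᵥ xs) = a + C *ᵥ v - xs := by
    have h2 : xs + C *ᵥ (S *ᵥ xs) = a + C *ᵥ v := by
      simpa [hMdef, Matrix.add_mulVec, Matrix.one_mulVec, ← Matrix.mulVec_mulVec] using hMx
    have := congrArg (fun z => z - xs) h2
    simpa [add_sub_cancel_left, add_comm] using this
  have hCl : C *ᵥ l0 = a - xs := by
    rw [hl0, Matrix.mulVec_sub, hCS]; abel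
  have hxa : xs - a = -(C *ᵥ l0) := by rw [hCl]; abel
  -- real inequality A: l0 maximizes the sup at xs
  have rA : ∀ l : Fin n → ℝ,
      -(1/2) * (l ⬝ᵥ C *ᵥ l) - l ⬝ᵥ (xs - a) ≤ -(1/2) * (l0 ⬝ᵥ C *ᵥ l0) - l0 ⬝ᵥ (xs - a) := by
    intro l
    have hpsd := hCpos (l - l0)
    simp only [Matrix.mulVec_sub, dotProduct_sub, sub_dotProduct] at hpsd
    have hsym := hCsym l0 l
    rw [hxa, dotProduct_neg, dotProduct_neg]
    linarith
  -- real inequality B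
  have rB : (-(1/2) * (l0 ⬝ᵥ C *ᵥ l0) - l0 ⬝ᵥ (xs - a)) + ((1/2) * (xs ⬝ᵥ S *ᵥ xs) - v ⬝ᵥ xs)
      ≤ (-(1/2) * (l0 ⬝ᵥ C *ᵥ l0) - l0 ⬝ᵥ (x - a)) + ((1/2) * (x ⬝ᵥ S *ᵥ x) - v ⬝ᵥ x) := by
    have hA1 : x ⬝ᵥ S *ᵥ xs = v ⬝ᵥ x + l0 ⬝ᵥ x := by
      rw [hSxs, dotProduct_add, dotProduct_comm x v, dotProduct_comm x l0]
    have hA2 : xs ⬝ᵥ S *ᵥ xs = v ⬝ᵥ xs + l0 ⬝ᵥ xs := by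
      rw [hSxs, dotProduct_add, dotProduct_comm xs v, dotProduct_comm xs l0]
    have hpsd := hSpos (x - xs)
    simp only [Matrix.mulVec_sub, dotProduct_sub, sub_dotProduct] at hpsd
    have hsym := hSsym xs x
    have hd1 : l0 ⬝ᵥ (x - a) = l0 ⬝ᵥ x - l0 ⬝ᵥ a := dotProduct_sub _ _ _
    have hd2 : l0 ⬝ᵥ (xs - a) = l0 ⬝ᵥ xs - l0 ⬝ᵥ a := dotProduct_sub _ _ _
    linarith
  -- pass to EReal
  have hsup : (⨆ l : Fin n → ℝ, ((-(1/2) * (l ⬝ᵥ C *ᵥ l) - l ⬝ᵥ (xs - a) : ℝ) : EReal))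
      = ((-(1/2) * (l0 ⬝ᵥ C *ᵥ l0) - l0 ⬝ᵥ (xs - a) : ℝ) : EReal) :=
    le_antisymm (iSup_le fun l => EReal.coe_le_coe_iff.mpr (rA l)) (le_iSup (fun l : Fin n → ℝ => ((-(1/2) * (l ⬝ᵥ C *ᵥ l) - l ⬝ᵥ (xs - a) : ℝ) : EReal)) l0)
  rw [hsup, ← EReal.coe_add]
  calc ((((-(1/2) * (l0 ⬝ᵥ C *ᵥ l0) - l0 ⬝ᵥ (xs - a)) + ((1/2) * (xs ⬝ᵥ S *ᵥ xs) - v ⬝ᵥ xs) : ℝ)) : EReal)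
      ≤ (((-(1/2) * (l0 ⬝ᵥ C *ᵥ l0) - l0 ⬝ᵥ (x - a)) + ((1/2) * (x ⬝ᵥ S *ᵥ x) - v ⬝ᵥ x) : ℝ) : EReal) :=
        EReal.coe_le_coe_iff.mpr rB
    _ = ((-(1/2) * (l0 ⬝ᵥ C *ᵥ l0) - l0 ⬝ᵥ (x - a) : ℝ) : EReal)
        + (((1/2) * (x ⬝ᵥ S *ᵥ x) - v ⬝ᵥ x : ℝ) : EReal) := EReal.coe_add _ _
    _ ≤ (⨆ l : Fin n → ℝ, ((-(1/2) * (l ⬝ᵥ C *ᵥ l) - l ⬝ᵥ (x - a) : ℝ) : EReal))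
        + (((1/2) * (x ⬝ᵥ S *ᵥ x) - v ⬝ᵥ x : ℝ) : EReal) :=
        add_le_add_left (le_iSup (fun l : Fin n → ℝ => ((-(1/2) * (l ⬝ᵥ C *ᵥ l) - l ⬝ᵥ (x - a) : ℝ) : EReal)) l0) _
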